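/- In a hyperbolic trapezoid with upper edge length l, lower edge length a, lateral edge lengths h1, h2, and upper angles α12 (at A1) and α21 (at A2), the sine law holds: sinh a / sinh l = sin α12 / cosh h2 = sin α21 / cosh h1. -/

import Mathlib

open Real

/-! Hyperboloid model of the hyperbolic plane `H²` of curvature `-1`:
points are `p : ℝ × ℝ × ℝ` with `mink p p = 1` and `p.1 > 0`, where `mink` is the
Minkowski bilinear form of signature `(+,-,-)`.  Distances satisfy
`cosh (hdist p q) = mink p q` and angles are computed by the hyperbolic cosine law. -/

/-- Minkowski bilinear form on `ℝ^{1,2}`. -/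
def mink (p q : ℝ × ℝ × ℝ) : ℝ := p.1 * q.1 - p.2.1 * q.2.1 - p.2.2 * q.2.2

/-- Inverse hyperbolic cosine. -/
noncomputable def arcosh (x : ℝ) : ℝ := Real.log (x + Real.sqrt (x ^ 2 - 1))

/-- Hyperbolic distance between points of the hyperboloid. -/
noncomputable def hdist (p q : ℝ × ℝ × ℝ) : ℝ := _root_.arcosh (mink p q)

/-- Angle at `p` between the geodesic segments from `p` to `q` and from `p` to `r`. -/
noncomputable def hangle (p q r : ℝ × ℝ × ℝ) : ℝ :=
  Real.arccos ((mink p q * mink p r - mink q r) /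
    (Real.sqrt (mink p q ^ 2 - 1) * Real.sqrt (mink p r ^ 2 - 1)))

/-- The point at signed arclength `s` along the base geodesic line `{x₂ = 0}` (the "lower
line"), moved to (signed) height `h` along the perpendicular at that point. -/
noncomputable def Pt (s h : ℝ) : ℝ × ℝ × ℝ :=
  (Real.cosh s * Real.cosh h, Real.sinh s * Real.cosh h, Real.sinh h)

lemma sinh_arcosh {x : ℝ} (hx : 1 ≤ x) :
    Real.sinh (_root_.arcosh x) = Real.sqrt (x ^ 2 - 1) := by
  have h0 : (0:ℝ) ≤ x ^ 2 - 1 := by nlinarith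
  have hs : (0:ℝ) ≤ Real.sqrt (x ^ 2 - 1) := Real.sqrt_nonneg _
  have hs2 : Real.sqrt (x ^ 2 - 1) ^ 2 = x ^ 2 - 1 := Real.sq_sqrt h0
  have ht : 0 < x + Real.sqrt (x ^ 2 - 1) := by linarith
  have hinv : (x + Real.sqrt (x ^ 2 - 1))⁻¹ = x - Real.sqrt (x ^ 2 - 1) := by
    have hmul : (x + Real.sqrt (x ^ 2 - 1)) * (x - Real.sqrt (x ^ 2 - 1)) = 1 := by
      nlinarith
    field_simp
    nlinarith
  rw [_root_.arcosh, Real.sinh_log ht, hinv]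
  ring

lemma one_lt_C {a h₁ h₂ : ℝ} (ha : 0 < a) :
    1 < Real.cosh h₁ * Real.cosh a * Real.cosh h₂ - Real.sinh h₁ * Real.sinh h₂ := by
  have hca : 1 < Real.cosh a := by
    nlinarith [Real.cosh_sq a, Real.sinh_pos_iff.mpr ha, Real.cosh_pos a]
  have h12 : Real.cosh (h₁ - h₂) = Real.cosh h₁ * Real.cosh h₂ - Real.sinh h₁ * Real.sinh h₂ :=
    Real.cosh_sub h₁ h₂
  nlinarith [Real.one_le_cosh (h₁ - h₂), Real.cosh_pos h₁, Real.cosh_pos h₂,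
    mul_pos (Real.cosh_pos h₁) (Real.cosh_pos h₂)]

/-- Key computation: the sine of the upper angle. -/
lemma sin_angle_aux (a h₁ h₂ : ℝ) (ha : 0 < a) (h1 : 0 < h₁) :
    Real.sin (Real.arccos
      (((Real.cosh h₁ * Real.cosh a * Real.cosh h₂ - Real.sinh h₁ * Real.sinh h₂) * Real.cosh h₁
          - Real.cosh a * Real.cosh h₂) /
        (Real.sqrt ((Real.cosh h₁ * Real.cosh a * Real.cosh h₂ - Real.sinh h₁ * Real.sinh h₂) ^ 2 - 1)
          * Real.sqrt (Real.cosh h₁ ^ 2 - 1)))) =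
    Real.sinh a * Real.cosh h₂ /
      Real.sqrt ((Real.cosh h₁ * Real.cosh a * Real.cosh h₂ - Real.sinh h₁ * Real.sinh h₂) ^ 2 - 1) := by
  have hC : 1 < Real.cosh h₁ * Real.cosh a * Real.cosh h₂ - Real.sinh h₁ * Real.sinh h₂ :=
    one_lt_C ha
  set C := Real.cosh h₁ * Real.cosh a * Real.cosh h₂ - Real.sinh h₁ * Real.sinh h₂ with hCdef
  have hC2 : (0:ℝ) < C ^ 2 - 1 := by nlinarith
  have hS2 : Real.sqrt (C ^ 2 - 1) ^ 2 = C ^ 2 - 1 := Real.sq_sqrt hC2.le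
  have hs1 : 0 < Real.sinh h₁ := Real.sinh_pos_iff.mpr h1
  have hsa : 0 < Real.sinh a := Real.sinh_pos_iff.mpr ha
  have hc2 : 0 < Real.cosh h₂ := Real.cosh_pos h₂
  have hS : (0:ℝ) < Real.sqrt (C ^ 2 - 1) := Real.sqrt_pos.mpr hC2
  have hsq1 : Real.sqrt (Real.cosh h₁ ^ 2 - 1) = Real.sinh h₁ := by
    rw [show Real.cosh h₁ ^ 2 - 1 = Real.sinh h₁ ^ 2 by nlinarith [Real.cosh_sq h₁]]
    exact Real.sqrt_sq hs1.le
  rw [Real.sin_arccos, hsq1]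
  have hpoly : (C ^ 2 - 1) * Real.sinh h₁ ^ 2 - (C * Real.cosh h₁ - Real.cosh a * Real.cosh h₂) ^ 2
      = Real.sinh h₁ ^ 2 * Real.cosh h₂ ^ 2 * Real.sinh a ^ 2 := by
    rw [hCdef]
    linear_combination (Real.cosh a ^ 2 * Real.cosh h₂ ^ 2
        - (Real.cosh h₁ * Real.cosh a * Real.cosh h₂ - Real.sinh h₁ * Real.sinh h₂) ^ 2)
        * (Real.cosh_sq h₁)
      + Real.sinh h₁ ^ 2 * Real.cosh h₂ ^ 2 * (Real.cosh_sq a)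
      + Real.sinh h₁ ^ 2 * (Real.cosh_sq h₂)
  have hd : (C ^ 2 - 1) * Real.sinh h₁ ^ 2 ≠ 0 := by positivity
  have key : 1 - ((C * Real.cosh h₁ - Real.cosh a * Real.cosh h₂) /
      (Real.sqrt (C ^ 2 - 1) * Real.sinh h₁)) ^ 2
      = (Real.sinh a * Real.cosh h₂ / Real.sqrt (C ^ 2 - 1)) ^ 2 := by
    rw [div_pow, mul_pow, hS2, one_sub_div hd, hpoly, div_pow, hS2,
      div_eq_div_iff hd hC2.ne']
    ring
  rw [key, Real.sqrt_sq (by positivity)]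

theorem trapezoid_sine_law (a h₁ h₂ : ℝ) (ha : 0 < a) (h1 : 0 < h₁) (h2 : 0 < h₂) :
    Real.sinh (hdist (Pt 0 0) (Pt a 0)) / Real.sinh (hdist (Pt 0 h₁) (Pt a h₂)) =
      Real.sin (hangle (Pt 0 h₁) (Pt a h₂) (Pt 0 0)) / Real.cosh h₂ ∧
    Real.sinh (hdist (Pt 0 0) (Pt a 0)) / Real.sinh (hdist (Pt 0 h₁) (Pt a h₂)) =
      Real.sin (hangle (Pt a h₂) (Pt 0 h₁) (Pt a 0)) / Real.cosh h₁ := by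
  have hsa : 0 < Real.sinh a := Real.sinh_pos_iff.mpr ha
  have hc1 : 0 < Real.cosh h₁ := Real.cosh_pos h₁
  have hc2 : 0 < Real.cosh h₂ := Real.cosh_pos h₂
  -- mink computations
  have mB : mink (Pt 0 0) (Pt a 0) = Real.cosh a := by
    unfold mink Pt
    rw [Real.cosh_zero, Real.sinh_zero]
    ring
  have mA : mink (Pt 0 h₁) (Pt a h₂)
      = Real.cosh h₁ * Real.cosh a * Real.cosh h₂ - Real.sinh h₁ * Real.sinh h₂ := by
    unfold mink Pt
    rw [Real.cosh_zero, Real.sinh_zero]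
    ring
  have mA' : mink (Pt a h₂) (Pt 0 h₁)
      = Real.cosh h₂ * Real.cosh a * Real.cosh h₁ - Real.sinh h₂ * Real.sinh h₁ := by
    unfold mink Pt
    rw [Real.cosh_zero, Real.sinh_zero]
    ring
  have m11 : mink (Pt 0 h₁) (Pt 0 0) = Real.cosh h₁ := by
    unfold mink Pt
    rw [Real.cosh_zero, Real.sinh_zero]
    ring
  have m22 : mink (Pt a h₂) (Pt a 0) = Real.cosh h₂ := by
    unfold mink Pt
    rw [Real.cosh_zero, Real.sinh_zero]
    dsimp only
    nlinarith [Real.cosh_sq a]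
  have m21 : mink (Pt a h₂) (Pt 0 0) = Real.cosh a * Real.cosh h₂ := by
    unfold mink Pt
    rw [Real.cosh_zero, Real.sinh_zero]
    ring
  have m12 : mink (Pt 0 h₁) (Pt a 0) = Real.cosh a * Real.cosh h₁ := by
    unfold mink Pt
    rw [Real.cosh_zero, Real.sinh_zero]
    ring
  have hC : 1 < Real.cosh h₁ * Real.cosh a * Real.cosh h₂ - Real.sinh h₁ * Real.sinh h₂ :=
    one_lt_C ha
  have hC2 : (0:ℝ) < (Real.cosh h₁ * Real.cosh a * Real.cosh h₂ - Real.sinh h₁ * Real.sinh h₂) ^ 2 - 1 := by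
    nlinarith
  have hS : (0:ℝ) <
      Real.sqrt ((Real.cosh h₁ * Real.cosh a * Real.cosh h₂ - Real.sinh h₁ * Real.sinh h₂) ^ 2 - 1) :=
    Real.sqrt_pos.mpr hC2
  -- sinh of distances
  have hsB : Real.sinh (hdist (Pt 0 0) (Pt a 0)) = Real.sinh a := by
    rw [hdist, mB, _root_.sinh_arcosh (Real.one_le_cosh a),
      show Real.cosh a ^ 2 - 1 = Real.sinh a ^ 2 by nlinarith [Real.cosh_sq a]]
    exact Real.sqrt_sq hsa.le
  have hsA : Real.sinh (hdist (Pt 0 h₁) (Pt a h₂))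
      = Real.sqrt ((Real.cosh h₁ * Real.cosh a * Real.cosh h₂ - Real.sinh h₁ * Real.sinh h₂) ^ 2 - 1) := by
    rw [hdist, mA]
    exact _root_.sinh_arcosh hC.le
  -- angles
  have hang1 : Real.sin (hangle (Pt 0 h₁) (Pt a h₂) (Pt 0 0))
      = Real.sinh a * Real.cosh h₂ /
        Real.sqrt ((Real.cosh h₁ * Real.cosh a * Real.cosh h₂ - Real.sinh h₁ * Real.sinh h₂) ^ 2 - 1) := by
    rw [hangle, mA, m11, m21]
    exact sin_angle_aux a h₁ h₂ ha h1
  have hang2 : Real.sin (hangle (Pt a h₂) (Pt 0 h₁) (Pt a 0))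
      = Real.sinh a * Real.cosh h₁ /
        Real.sqrt ((Real.cosh h₁ * Real.cosh a * Real.cosh h₂ - Real.sinh h₁ * Real.sinh h₂) ^ 2 - 1) := by
    rw [hangle, mA', m22, m12]
    have haux := sin_angle_aux a h₂ h₁ ha h2
    rw [show Real.cosh h₂ * Real.cosh a * Real.cosh h₁ - Real.sinh h₂ * Real.sinh h₁
        = Real.cosh h₁ * Real.cosh a * Real.cosh h₂ - Real.sinh h₁ * Real.sinh h₂ by ring] at haux ⊢
    exact haux
  refine ⟨?_, ?_⟩
  · rw [hsB, hsA, hang1, div_div, mul_comm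
      (Real.sqrt ((Real.cosh h₁ * Real.cosh a * Real.cosh h₂ - Real.sinh h₁ * Real.sinh h₂) ^ 2 - 1))
      (Real.cosh h₂), mul_comm (Real.sinh a) (Real.cosh h₂), mul_div_mul_left _ _ hc2.ne']
  · rw [hsB, hsA, hang2, div_div, mul_comm
      (Real.sqrt ((Real.cosh h₁ * Real.cosh a * Real.cosh h₂ - Real.sinh h₁ * Real.sinh h₂) ^ 2 - 1))
      (Real.cosh h₁), mul_comm (Real.sinh a) (Real.cosh h₁), mul_div_mul_left _ _ hc1.ne']
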